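/- If n, a, k₁, k₂ are integers with n = k₁(a+1) + k₂(a−1), 6 ≤ a ≤ ⌊n/2⌋ and a even, then β_b(C(n;1,a)) ≥ k₁·(a/2) + k₂·(a/2 − 1). -/

import Mathlib

/-- The eccentricity of a vertex: maximum distance to any other vertex. -/
noncomputable def eccent {V : Type*} [Fintype V] (G : SimpleGraph V) (v : V) : ℕ :=
  Finset.univ.sup (fun u => G.dist v u)

/-- The diameter of a finite graph: maximum eccentricity. -/
noncomputable def graphDiam {V : Type*} [Fintype V] (G : SimpleGraph V) : ℕ :=
  Finset.univ.sup (fun v => eccent G v)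

/-- `f` is an independent broadcast on `G`. -/
def IsIndepBroadcast {V : Type*} [Fintype V] (G : SimpleGraph V) (f : V → ℕ) : Prop :=
  (∀ v, f v ≤ eccent G v) ∧
  ∀ u v : V, u ≠ v → 0 < f u → 0 < f v → max (f u) (f v) < G.dist u v

/-- The broadcast independence number: maximum cost of an independent broadcast. -/
noncomputable def betaB {V : Type*} [Fintype V] (G : SimpleGraph V) : ℕ :=
  sSup {k | ∃ f : V → ℕ, IsIndepBroadcast G f ∧ ∑ v, f v = k}

/-- The independence number: maximum size of an independent set. -/
noncomputable def alphaNum {V : Type*} [Fintype V] (G : SimpleGraph V) : ℕ :=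
  sSup {k | ∃ s : Finset V, (∀ u ∈ s, ∀ v ∈ s, ¬ G.Adj u v) ∧ s.card = k}

/-- The circulant graph `C(n;1,a)` on vertices `v_0,…,v_{n-1}` with edges
`v_i v_{i+1}` and `v_i v_{i+a}`, indices mod `n`. -/
def circulantGraph (n a : ℕ) : SimpleGraph (Fin n) :=
  SimpleGraph.fromRel (fun i j => (i.val + 1) % n = j.val ∨ (i.val + a) % n = j.val)

/- ### Auxiliary arithmetic lemmas -/

lemma zero_or_le' (x m : ℕ) : x * m = 0 ∨ m ≤ x * m := by
  cases x with
  | zero => left; simp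
  | succ k =>
      right
      have : (k+1) * m = k*m + m := by ring
      omega

lemma le_mul_split' (x y m : ℕ) (h : x < y) : x*m + m = y*m ∨ x*m + m + m ≤ y*m := by
  rcases eq_or_lt_of_le (show x + 1 ≤ y by omega) with h1 | h1
  · left
    rw [← h1]; ring
  · right
    have h2 : (x+2) * m ≤ y * m := Nat.mul_le_mul (by omega) (le_refl m)
    have h3 : (x+2) * m = x*m + m + m := by ring
    omega

lemma mul_3way' (x y m : ℕ) (h : x ≤ y) : x*m = y*m ∨ x*m + m = y*m ∨ x*m + m + m ≤ y*m := by
  rcases eq_or_lt_of_le h with rfl | h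
  · left; rfl
  · right; exact le_mul_split' x y m h

lemma keyFF (h k₁ k₂ n b b' j j' : ℕ) (hh : 3 ≤ h)
    (hn : n = k₁*(2*h+1) + k₂*(2*h-1)) (hn4 : 4*h ≤ n)
    (hb' : b' < k₁) (hj : j < h) (hj' : j' < h)
    (hlt : b*h + j < b'*h + j') :
    b*(2*h+1) + 2*j + 2 ≤ b'*(2*h+1) + 2*j' ∧ b'*(2*h+1) + 2*j' + 3 ≤ n ∧
    b'*(2*h+1) + 2*j' ≠ b*(2*h+1) + 2*j + 2*h ∧
    b'*(2*h+1) + 2*j' + 2*h ≠ b*(2*h+1) + 2*j + n := by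
  have hbb : b ≤ b' := by
    by_contra hc
    have h1 : (b'+1)*h ≤ b*h := Nat.mul_le_mul (by omega) (le_refl h)
    have h2 : (b'+1)*h = b'*h + h := by ring
    omega
  have hbj : b*h = b'*h → j < j' := by
    intro he
    have : b = b' := Nat.eq_of_mul_eq_mul_right (by omega) he
    subst this; omega
  have hbj' : b*(2*h+1) = b'*(2*h+1) → b*h = b'*h := by
    intro he
    have : b = b' := Nat.eq_of_mul_eq_mul_right (by omega) he
    subst this; rfl
  have f1 := mul_3way' b b' (2*h+1) hbb
  have f2 := le_mul_split' b' k₁ (2*h+1) hb'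
  have f3 := zero_or_le' k₂ (2*h-1)
  have f4 := zero_or_le' b (2*h+1)
  rcases f1 with e | e | e
  · have := hbj (hbj' e); omega
  · omega
  · omega

lemma keySS (h k₁ k₂ n b b' j j' : ℕ) (hh : 3 ≤ h)
    (hn : n = k₁*(2*h+1) + k₂*(2*h-1)) (hn4 : 4*h ≤ n)
    (hb' : b' < k₂) (hj : j < h - 1) (hj' : j' < h - 1)
    (hlt : b*(h-1) + j < b'*(h-1) + j') :
    (k₁*(2*h+1) + b*(2*h-1) + 2*j) + 2 ≤ k₁*(2*h+1) + b'*(2*h-1) + 2*j' ∧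
    (k₁*(2*h+1) + b'*(2*h-1) + 2*j') + 3 ≤ n ∧
    k₁*(2*h+1) + b'*(2*h-1) + 2*j' ≠ (k₁*(2*h+1) + b*(2*h-1) + 2*j) + 2*h ∧
    (k₁*(2*h+1) + b'*(2*h-1) + 2*j') + 2*h ≠ (k₁*(2*h+1) + b*(2*h-1) + 2*j) + n := by
  have hbb : b ≤ b' := by
    by_contra hc
    have h1 : (b'+1)*(h-1) ≤ b*(h-1) := Nat.mul_le_mul (by omega) (le_refl _)
    have h2 : (b'+1)*(h-1) = b'*(h-1) + (h-1) := by ring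
    omega
  have hbj : b*(h-1) = b'*(h-1) → j < j' := by
    intro he
    have : b = b' := Nat.eq_of_mul_eq_mul_right (by omega) he
    subst this; omega
  have hbj' : b*(2*h-1) = b'*(2*h-1) → b*(h-1) = b'*(h-1) := by
    intro he
    have : b = b' := Nat.eq_of_mul_eq_mul_right (by omega) he
    subst this; rfl
  have f1 := mul_3way' b b' (2*h-1) hbb
  have f2 := le_mul_split' b' k₂ (2*h-1) hb'
  have f3 := zero_or_le' k₁ (2*h+1)
  have f4 := zero_or_le' b (2*h-1)
  rcases f1 with e | e | e
  · have := hbj (hbj' e); omega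
  · omega
  · omega

lemma keyFS (h k₁ k₂ n b b' j j' : ℕ) (hh : 3 ≤ h)
    (hn : n = k₁*(2*h+1) + k₂*(2*h-1)) (hn4 : 4*h ≤ n)
    (hb : b < k₁) (hb' : b' < k₂) (hj : j < h) (hj' : j' < h - 1) :
    (b*(2*h+1) + 2*j) + 2 ≤ k₁*(2*h+1) + b'*(2*h-1) + 2*j' ∧
    (k₁*(2*h+1) + b'*(2*h-1) + 2*j') + 3 ≤ n ∧
    k₁*(2*h+1) + b'*(2*h-1) + 2*j' ≠ (b*(2*h+1) + 2*j) + 2*h ∧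
    (k₁*(2*h+1) + b'*(2*h-1) + 2*j') + 2*h ≠ (b*(2*h+1) + 2*j) + n := by
  have f1 := le_mul_split' b k₁ (2*h+1) hb
  have f2 := le_mul_split' b' k₂ (2*h-1) hb'
  have f3 := zero_or_le' b' (2*h-1)
  have f4 := zero_or_le' b (2*h+1)
  omega

/- ### The selection function -/

def gfun (h k₁ i : ℕ) : ℕ :=
  if i < k₁ * h then (i / h) * (2*h+1) + 2 * (i % h)
  else k₁ * (2*h+1) + ((i - k₁*h) / (h-1)) * (2*h-1) + 2 * ((i - k₁*h) % (h-1))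

lemma gfun_spec (h k₁ k₂ i : ℕ) (hh : 3 ≤ h) (hi : i < k₁*h + k₂*(h-1)) :
    (∃ b j, b < k₁ ∧ j < h ∧ i = b*h + j ∧ gfun h k₁ i = b*(2*h+1) + 2*j) ∨
    (∃ b j, b < k₂ ∧ j < h-1 ∧ i = k₁*h + (b*(h-1) + j) ∧
      gfun h k₁ i = k₁*(2*h+1) + b*(2*h-1) + 2*j) := by
  by_cases hc : i < k₁ * h
  · left
    refine ⟨i / h, i % h, ?_, Nat.mod_lt _ (by omega), ?_, by simp [gfun, hc]⟩
    · by_contra hk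
      have h1 : k₁ * h ≤ (i/h) * h := Nat.mul_le_mul (by omega) (le_refl h)
      have h2 := Nat.div_add_mod i h
      have h3 : h * (i/h) = (i/h) * h := mul_comm _ _
      omega
    · have h2 := Nat.div_add_mod i h
      have h3 : h * (i/h) = (i/h) * h := mul_comm _ _
      omega
  · right
    set i' := i - k₁*h with hi'
    refine ⟨i' / (h-1), i' % (h-1), ?_, Nat.mod_lt _ (by omega), ?_, by simp [gfun, hc, hi']⟩
    · by_contra hk
      have h1 : k₂ * (h-1) ≤ (i'/(h-1)) * (h-1) := Nat.mul_le_mul (by omega) (le_refl _)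
      have h2 := Nat.div_add_mod i' (h-1)
      have h3 : (h-1) * (i'/(h-1)) = (i'/(h-1)) * (h-1) := mul_comm _ _
      omega
    · have h2 := Nat.div_add_mod i' (h-1)
      have h3 : (h-1) * (i'/(h-1)) = (i'/(h-1)) * (h-1) := mul_comm _ _
      omega

lemma gfun_lt (h k₁ k₂ n i : ℕ) (hh : 3 ≤ h)
    (hn : n = k₁*(2*h+1) + k₂*(2*h-1)) (hi : i < k₁*h + k₂*(h-1)) :
    gfun h k₁ i + 3 ≤ n := by
  rcases gfun_spec h k₁ k₂ i hh hi with ⟨b, j, hb, hj, _, hg⟩ | ⟨b, j, hb, hj, _, hg⟩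
  · have f2 := le_mul_split' b k₁ (2*h+1) hb
    omega
  · have f2 := le_mul_split' b k₂ (2*h-1) hb
    omega

lemma gfun_pair (h k₁ k₂ n i i' : ℕ) (hh : 3 ≤ h)
    (hn : n = k₁*(2*h+1) + k₂*(2*h-1)) (hn4 : 4*h ≤ n)
    (hii : i < i') (hi' : i' < k₁*h + k₂*(h-1)) :
    gfun h k₁ i + 2 ≤ gfun h k₁ i' ∧ gfun h k₁ i' + 3 ≤ n ∧
    gfun h k₁ i' ≠ gfun h k₁ i + 2*h ∧ gfun h k₁ i' + 2*h ≠ gfun h k₁ i + n := by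
  have hi : i < k₁*h + k₂*(h-1) := lt_trans hii hi'
  rcases gfun_spec h k₁ k₂ i hh hi with ⟨b, j, hb, hj, hie, hg⟩ | ⟨b, j, hb, hj, hie, hg⟩ <;>
    rcases gfun_spec h k₁ k₂ i' hh hi' with ⟨b', j', hb', hj', hie', hg'⟩ | ⟨b', j', hb', hj', hie', hg'⟩
  · rw [hg, hg']
    exact keyFF h k₁ k₂ n b b' j j' hh hn hn4 hb' hj hj' (by omega)
  · rw [hg, hg']
    exact keyFS h k₁ k₂ n b b' j j' hh hn hn4 hb hb' hj hj'
  · exfalso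
    have h1 : (b'+1)*h ≤ k₁*h := Nat.mul_le_mul (by omega) (le_refl h)
    have h2 : (b'+1)*h = b'*h + h := by ring
    omega
  · rw [hg, hg']
    exact keySS h k₁ k₂ n b b' j j' hh hn hn4 hb' hj hj' (by omega)

theorem stmt12 (n a k₁ k₂ : ℕ) (hn : n = k₁ * (a + 1) + k₂ * (a - 1))
    (ha : 6 ≤ a) (han : a ≤ n / 2) (heven : Even a) :
    k₁ * (a / 2) + k₂ * (a / 2 - 1) ≤ betaB (circulantGraph n a) := by
  obtain ⟨h, rfl⟩ := heven
  have hh : 3 ≤ h := by omega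
  have hn' : n = k₁*(2*h+1) + k₂*(2*h-1) := by
    have e1 : h + h + 1 = 2*h+1 := by ring
    have e2 : h + h - 1 = 2*h-1 := by omega
    rw [hn, e1, e2]
  have hn4 : 4*h ≤ n := by omega
  have hnpos : 0 < n := by omega
  set G := circulantGraph n (h + h) with hG
  set M := k₁*h + k₂*(h-1) with hM
  have htarget : k₁ * ((h+h)/2) + k₂ * ((h+h)/2 - 1) = M := by
    have e : (h+h)/2 = h := by omega
    rw [e]
  rw [htarget]
  -- adjacency characterization
  have hadj_iff : ∀ u v : Fin n, G.Adj u v ↔ u.val ≠ v.val ∧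
      ((u.val+1) % n = v.val ∨ (u.val+(h+h)) % n = v.val ∨
       (v.val+1) % n = u.val ∨ (v.val+(h+h)) % n = u.val) := by
    intro u v
    rw [hG]
    show (SimpleGraph.fromRel _).Adj u v ↔ _
    rw [SimpleGraph.fromRel_adj]
    constructor
    · rintro ⟨hne, hor⟩
      refine ⟨fun hc => hne (Fin.ext hc), by tauto⟩
    · rintro ⟨hne, hor⟩
      refine ⟨fun hc => hne (by rw [hc]), by tauto⟩
  -- reachability
  have hreach : ∀ u v : Fin n, G.Reachable u v := by
    have hr : ∀ m : ℕ, ∀ hm : m < n, G.Reachable ⟨0, hnpos⟩ ⟨m, hm⟩ := by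
      intro m
      induction m with
      | zero => intro hm; exact SimpleGraph.Reachable.refl _
      | succ k ih =>
          intro hm
          have hk : k < n := by omega
          have hadj : G.Adj ⟨k, hk⟩ ⟨k+1, hm⟩ := by
            rw [hadj_iff]
            exact ⟨by simp, Or.inl (by simp [Nat.mod_eq_of_lt hm])⟩
          exact (ih hk).trans hadj.reachable
    intro u v
    exact (hr u.val u.isLt).symm.trans (hr v.val v.isLt)
  -- distance facts
  have hdist : ∀ u v : Fin n, u ≠ v → ¬ G.Adj u v → 1 < G.dist u v := by
    intro u v hne hna
    have h0 : G.dist u v ≠ 0 := by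
      intro hc
      rcases SimpleGraph.dist_eq_zero_iff_eq_or_not_reachable.mp hc with h1 | h1
      · exact hne h1
      · exact h1 (hreach u v)
    have h1 : G.dist u v ≠ 1 := fun hc => hna (SimpleGraph.dist_eq_one_iff_adj.mp hc)
    omega
  have hecc : ∀ v : Fin n, 1 ≤ eccent G v := by
    intro v
    have hex : ∃ u : Fin n, v ≠ u := by
      by_cases hv : v.val = 0
      · exact ⟨⟨1, by omega⟩, fun hc => by simp [Fin.ext_iff, hv] at hc⟩
      · exact ⟨⟨0, hnpos⟩, fun hc => by simp [Fin.ext_iff, hv] at hc⟩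
    obtain ⟨u, hu⟩ := hex
    have h1 : 0 < G.dist v u := SimpleGraph.Reachable.pos_dist_of_ne (hreach v u) hu
    exact le_trans h1 (Finset.le_sup (Finset.mem_univ u))
  -- the embedding
  have hgl : ∀ i : Fin M, gfun h k₁ i.val < n := by
    intro i
    have := gfun_lt h k₁ k₂ n i.val hh hn' i.isLt
    omega
  set emb : Fin M → Fin n := fun i => ⟨gfun h k₁ i.val, hgl i⟩ with hemb
  have hinj : Function.Injective emb := by
    intro i i' he
    by_contra hne
    have hvv : gfun h k₁ i.val = gfun h k₁ i'.val := by
      have := congrArg Fin.val he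
      simpa [hemb] using this
    rcases lt_trichotomy i i' with hlt | heq | hlt
    · have := (gfun_pair h k₁ k₂ n i.val i'.val hh hn' hn4 hlt i'.isLt).1
      omega
    · exact hne heq
    · have := (gfun_pair h k₁ k₂ n i'.val i.val hh hn' hn4 hlt i.isLt).1
      omega
  set S : Finset (Fin n) := Finset.image emb Finset.univ with hS
  -- non-adjacency within S
  have hpair : ∀ i i' : Fin M, (i : ℕ) < i' → ¬ G.Adj (emb i) (emb i') := by
    intro i i' hlt hadj
    obtain ⟨x, y, hp⟩ : ∃ x y, x = gfun h k₁ i.val ∧ y = gfun h k₁ i'.val :=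
      ⟨_, _, rfl, rfl⟩
    obtain ⟨hp1, hp2⟩ := hp
    have hkey := gfun_pair h k₁ k₂ n i.val i'.val hh hn' hn4 hlt i'.isLt
    rw [← hp1, ← hp2] at hkey
    obtain ⟨hk1, hk2, hk3, hk4⟩ := hkey
    rw [hadj_iff] at hadj
    obtain ⟨hne, hor⟩ := hadj
    have hex : (emb i).val = x := by rw [hemb, hp1]
    have hey : (emb i').val = y := by rw [hemb, hp2]
    rw [hex, hey] at hor
    rcases hor with h1 | h1 | h1 | h1
    · rw [Nat.mod_eq_of_lt (by omega)] at h1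
      omega
    · rcases lt_or_ge (x + (h+h)) n with hc | hc
      · rw [Nat.mod_eq_of_lt hc] at h1
        omega
      · rw [Nat.mod_eq_sub_mod hc, Nat.mod_eq_of_lt (by omega)] at h1
        omega
    · rw [Nat.mod_eq_of_lt (by omega)] at h1
      omega
    · rcases lt_or_ge (y + (h+h)) n with hc | hc
      · rw [Nat.mod_eq_of_lt hc] at h1
        omega
      · rw [Nat.mod_eq_sub_mod hc, Nat.mod_eq_of_lt (by omega)] at h1
        omega
  have hSadj : ∀ u ∈ S, ∀ v ∈ S, u ≠ v → ¬ G.Adj u v := by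
    intro u hu v hv hne
    rw [hS, Finset.mem_image] at hu hv
    obtain ⟨i, _, rfl⟩ := hu
    obtain ⟨i', _, rfl⟩ := hv
    rcases lt_trichotomy (i : ℕ) (i' : ℕ) with hlt | heq | hlt
    · exact hpair i i' hlt
    · exact absurd (Fin.ext heq) (fun hc => hne (by rw [hc]))
    · intro hadj
      exact hpair i' i hlt hadj.symm
  -- the broadcast function
  set f : Fin n → ℕ := fun v => if v ∈ S then 1 else 0 with hf
  have hfb : IsIndepBroadcast G f := by
    constructor
    · intro v
      by_cases hv : v ∈ S
      · simpa [hf, hv] using hecc v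
      · simp [hf, hv]
    · intro u v hne hfu hfv
      have hu : u ∈ S := by
        by_contra hc
        simp [hf, hc] at hfu
      have hv : v ∈ S := by
        by_contra hc
        simp [hf, hc] at hfv
      have hna := hSadj u hu v hv hne
      have hd := hdist u v hne hna
      simp only [hf, if_pos hu, if_pos hv]
      simpa using hd
  have hsum : ∑ v, f v = M := by
    have h1 : ∑ v, f v = S.card := by
      rw [hf]
      rw [Finset.sum_ite_mem, Finset.univ_inter, Finset.sum_const, smul_eq_mul, mul_one]
    rw [h1, hS, Finset.card_image_of_injective _ hinj, Finset.card_univ, Fintype.card_fin]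
  have hbdd : BddAbove {k | ∃ f : Fin n → ℕ, IsIndepBroadcast G f ∧ ∑ v, f v = k} := by
    refine ⟨∑ v, eccent G v, ?_⟩
    rintro k ⟨f', ⟨hf1, _⟩, rfl⟩
    exact Finset.sum_le_sum (fun v _ => hf1 v)
  exact le_csSup hbdd ⟨f, hfb, hsum⟩
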